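/- For the scale-invariant losses f_1, f_2 of Theorem 1 evaluated on the unit sphere, the sum of gradients satisfies ‖g_1 + g_2‖² = 4(x² cos⁴ α + y² sin⁴ α − (x² cos² α + y² sin² α)²). -/

import Mathlib

open Real

noncomputable abbrev E3 := EuclideanSpace ℝ (Fin 3)

lemma grad_eq (c s : ℝ) (f : E3 → ℝ)
    (hf : ∀ v : E3, f v = (1/2) * (v 0 * c + v 1 * s) ^ 2 / ((v 0)^2 + (v 1)^2 + (v 2)^2))
    (v : E3) (hv : (v 0)^2 + (v 1)^2 + (v 2)^2 = 1) :
    gradient f v = (WithLp.equiv 2 (Fin 3 → ℝ)).symm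
      ![(v 0 * c + v 1 * s) * c - (v 0 * c + v 1 * s)^2 * v 0,
        (v 0 * c + v 1 * s) * s - (v 0 * c + v 1 * s)^2 * v 1,
        -(v 0 * c + v 1 * s)^2 * v 2] := by
  have hfeq : f = fun v : E3 => ((1/2) * (v 0 * c + v 1 * s) ^ 2) * ((v 0)^2 + (v 1)^2 + (v 2)^2)⁻¹ := by
    funext w; rw [hf w]; ring
  set p0 : E3 →L[ℝ] ℝ := EuclideanSpace.proj 0
  set p1 : E3 →L[ℝ] ℝ := EuclideanSpace.proj 1
  set p2 : E3 →L[ℝ] ℝ := EuclideanSpace.proj 2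
  have hu : HasFDerivAt (fun v : E3 => v 0 * c + v 1 * s)
      ((p0.smulRight c) + (p1.smulRight s)) v :=
    (p0.hasFDerivAt.mul_const' c).add (p1.hasFDerivAt.mul_const' s)
  have hN : HasFDerivAt (fun v : E3 => (1/2) * (v 0 * c + v 1 * s) ^ 2)
      ((1/2 : ℝ) • ((v 0 * c + v 1 * s) • ((p0.smulRight c) + (p1.smulRight s))
        + (v 0 * c + v 1 * s) • ((p0.smulRight c) + (p1.smulRight s)))) v := by
    have := (hu.mul hu).const_mul (1/2 : ℝ)
    convert this using 2 with w
    case e'_11 => simp only [Pi.mul_apply]; ring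
    all_goals rfl
  have hD : HasFDerivAt (fun v : E3 => (v 0)^2 + (v 1)^2 + (v 2)^2)
      (((v 0 • p0 + v 0 • p0) + (v 1 • p1 + v 1 • p1)) + (v 2 • p2 + v 2 • p2)) v := by
    have := (((p0.hasFDerivAt (x := v)).mul (p0.hasFDerivAt (x := v))).add
      ((p1.hasFDerivAt (x := v)).mul (p1.hasFDerivAt (x := v)))).add
      ((p2.hasFDerivAt (x := v)).mul (p2.hasFDerivAt (x := v)))
    convert this using 2
    case e'_11 w =>
      show w 0 ^ 2 + w 1 ^ 2 + w 2 ^ 2 = w 0 * w 0 + w 1 * w 1 + w 2 * w 2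
      ring
    all_goals rfl
  have hD1 : ((v 0)^2 + (v 1)^2 + (v 2)^2 : ℝ) ≠ 0 := by rw [hv]; norm_num
  have hInv : HasFDerivAt (fun v : E3 => ((v 0)^2 + (v 1)^2 + (v 2)^2)⁻¹)
      ((-(((v 0)^2 + (v 1)^2 + (v 2)^2)^2)⁻¹) •
        (((v 0 • p0 + v 0 • p0) + (v 1 • p1 + v 1 • p1)) + (v 2 • p2 + v 2 • p2))) v :=
    (hasDerivAt_inv hD1).comp_hasFDerivAt v hD
  have hF := hN.mul hInv
  have hgrad : HasGradientAt f ((WithLp.equiv 2 (Fin 3 → ℝ)).symm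
      ![(v 0 * c + v 1 * s) * c - (v 0 * c + v 1 * s)^2 * v 0,
        (v 0 * c + v 1 * s) * s - (v 0 * c + v 1 * s)^2 * v 1,
        -(v 0 * c + v 1 * s)^2 * v 2]) v := by
    rw [hasGradientAt_iff_hasFDerivAt, hfeq]
    convert hF using 1
    case e'_9 => rfl
    case e'_11 => rfl
    apply ContinuousLinearMap.ext
    intro y
    simp only [InnerProductSpace.toDual_apply_apply, PiLp.inner_apply, RCLike.inner_apply, conj_trivial,
      ContinuousLinearMap.add_apply, ContinuousLinearMap.smul_apply,
      ContinuousLinearMap.smulRight_apply, ContinuousLinearMap.coe_smul', Pi.smul_apply,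
      smul_eq_mul, Fin.sum_univ_three, WithLp.equiv_symm_apply, PiLp.toLp_apply, Matrix.cons_val_zero,
      Matrix.cons_val_one, Matrix.head_cons, Matrix.cons_val_two, Matrix.tail_cons]
    have h0 : p0 y = y 0 := rfl
    have h1 : p1 y = y 1 := rfl
    have h2 : p2 y = y 2 := rfl
    rw [h0, h1, h2, hv]
    ring
  exact hgrad.gradient

theorem norm_sq_grad_sum (α : ℝ) (hα : 0 < α ∧ α < π / 4)
    (f₁ f₂ : EuclideanSpace ℝ (Fin 3) → ℝ)
    (hf₁ : ∀ v : EuclideanSpace ℝ (Fin 3),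
      f₁ v = (1 / 2) * (v 0 * cos α + v 1 * sin α) ^ 2
        / ((v 0) ^ 2 + (v 1) ^ 2 + (v 2) ^ 2))
    (hf₂ : ∀ v : EuclideanSpace ℝ (Fin 3),
      f₂ v = (1 / 2) * (v 0 * cos α - v 1 * sin α) ^ 2
        / ((v 0) ^ 2 + (v 1) ^ 2 + (v 2) ^ 2))
    (v : EuclideanSpace ℝ (Fin 3)) (hv : (v 0) ^ 2 + (v 1) ^ 2 + (v 2) ^ 2 = 1) :
    ‖gradient f₁ v + gradient f₂ v‖ ^ 2
      = 4 * ((v 0) ^ 2 * cos α ^ 4 + (v 1) ^ 2 * sin α ^ 4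
          - ((v 0) ^ 2 * cos α ^ 2 + (v 1) ^ 2 * sin α ^ 2) ^ 2) := by
  have h1 := grad_eq (cos α) (sin α) f₁ hf₁ v hv
  have h2 := grad_eq (cos α) (-sin α) f₂ (by intro w; rw [hf₂ w]; ring_nf) v hv
  rw [h1, h2]
  rw [← real_inner_self_eq_norm_sq]
  simp only [PiLp.inner_apply, RCLike.inner_apply, conj_trivial, PiLp.add_apply,
    WithLp.equiv_symm_apply, PiLp.toLp_apply, Fin.sum_univ_three, Matrix.cons_val_zero, Matrix.cons_val_one,
    Matrix.head_cons, Matrix.cons_val_two, Matrix.tail_cons]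
  nlinarith [hv, sq_nonneg (v 0), sq_nonneg (v 1), sq_nonneg (v 2)]
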